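/- Consider any finite MDP in which every deterministic stationary policy π induces a Markov chain P_π with a unique stationary distribution ν_π and finite mixing time τ_π, and let τ_unif := sup over deterministic stationary policies π of τ_π be finite. Then the bounded transient time property holds with parameter at most 4·τ_unif; that is, for every deterministic stationary policy π and every state s, E_s^π[T_{R^π}] ≤ 4·τ_unif. -/

import Mathlib

open Filter Matrix MeasureTheory
open scoped BigOperators ENNReal

namespace PaperMDP

variable {S A : Type*}

section Core

variable [Fintype S] [Fintype A] [DecidableEq S] [Nonempty S] [Nonempty A]

/-- `p` is a transition probability kernel on `S × A`. -/
def IsKernel (p : S → A → S → ℝ) : Prop :=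
  ∀ s a, (∀ s', 0 ≤ p s a s') ∧ (∑ s', p s a s') = 1

/-- `pol` is a stationary Markov (randomized) policy. -/
def IsPolicy (pol : S → A → ℝ) : Prop :=
  ∀ s, (∀ a, 0 ≤ pol s a) ∧ (∑ a, pol s a) = 1

/-- Transition matrix `P_π` induced by a policy. -/
def polMat (p : S → A → S → ℝ) (pol : S → A → ℝ) : Matrix S S ℝ :=
  Matrix.of fun s s' => ∑ a, pol s a * p s a s'

/-- Reward vector `r_π` induced by a policy. -/
def polRew (r : S → A → ℝ) (pol : S → A → ℝ) : S → ℝ := fun s => ∑ a, pol s a * r s a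

/-- The deterministic policy induced by `d : S → A`, viewed as a randomized policy. -/
def detPol [DecidableEq A] (d : S → A) : S → A → ℝ := fun s a => if a = d s then 1 else 0

/-- `(I - γ M)⁻¹ v = ∑_{t ≥ 0} γ^t M^t v` (Neumann series). -/
noncomputable def resApply (γ : ℝ) (M : Matrix S S ℝ) (v : S → ℝ) : S → ℝ :=
  ∑' t : ℕ, γ ^ t • (M ^ t *ᵥ v)

/-- Discounted value function `V_γ^π`. -/
noncomputable def dval (p : S → A → S → ℝ) (r : S → A → ℝ) (γ : ℝ) (pol : S → A → ℝ) :
    S → ℝ :=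
  resApply γ (polMat p pol) (polRew r pol)

/-- Optimal discounted value function `V_γ^*`. -/
noncomputable def dvalStar (p : S → A → S → ℝ) (r : S → A → ℝ) (γ : ℝ) : S → ℝ := fun s =>
  ⨆ q : {q : S → A → ℝ // IsPolicy q}, dval p r γ q.1 s

/-- `pol` is an optimal policy for the `γ`-discounted MDP `(p, r, γ)`. -/
def DiscountedOptimal (p : S → A → S → ℝ) (r : S → A → ℝ) (γ : ℝ) (pol : S → A → ℝ) :
    Prop :=
  IsPolicy pol ∧ ∀ q : S → A → ℝ, IsPolicy q → ∀ s, dval p r γ q s ≤ dval p r γ pol s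

/-- Cesàro limit of a sequence of vectors. -/
noncomputable def cesaro (f : ℕ → S → ℝ) : S → ℝ :=
  limUnder atTop fun N : ℕ => (N : ℝ)⁻¹ • ∑ T ∈ Finset.range N, f T

/-- The gain (long-run average reward) `ρ^π`. -/
noncomputable def gain (p : S → A → S → ℝ) (r : S → A → ℝ) (pol : S → A → ℝ) : S → ℝ :=
  cesaro fun t => (polMat p pol ^ t) *ᵥ polRew r pol

/-- The bias function `h^π`. -/
noncomputable def bias (p : S → A → S → ℝ) (r : S → A → ℝ) (pol : S → A → ℝ) : S → ℝ :=
  cesaro fun T => ∑ t ∈ Finset.range T, ((polMat p pol ^ t) *ᵥ polRew r pol - gain p r pol)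

/-- Blackwell optimality of a policy. -/
def Blackwell (p : S → A → S → ℝ) (r : S → A → ℝ) (pol : S → A → ℝ) : Prop :=
  IsPolicy pol ∧ ∃ γ₀ ∈ Set.Ioo (0 : ℝ) 1, ∀ γ ∈ Set.Ico γ₀ 1,
    ∀ q : S → A → ℝ, IsPolicy q → ∀ s, dval p r γ q s ≤ dval p r γ pol s

/-- The optimal gain `ρ^*(s) = sup_π ρ^π(s)`. -/
noncomputable def gainStar (p : S → A → S → ℝ) (r : S → A → ℝ) : S → ℝ := fun s =>
  ⨆ q : {q : S → A → ℝ // IsPolicy q}, gain p r q.1 s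

/-- Span seminorm `sp(v) = max v - min v`. -/
noncomputable def span (v : S → ℝ) : ℝ := (⨆ s, v s) - (⨅ s, v s)

/-- `s'` is reachable from `s` in the Markov chain with transition matrix `M`. -/
def Reaches (M : Matrix S S ℝ) (s s' : S) : Prop := ∃ t : ℕ, 0 < (M ^ t) s s'

/-- A state of a finite Markov chain is recurrent iff its communicating class is closed. -/
def Recurrent (M : Matrix S S ℝ) (s : S) : Prop := ∀ s', Reaches M s s' → Reaches M s' s

/-- Weakly communicating MDP. -/
def WeaklyCommunicating (p : S → A → S → ℝ) : Prop :=
  ∃ S1 : Set S,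
    (∀ s ∈ S1, ∀ pol : S → A → ℝ, IsPolicy pol → ¬Recurrent (polMat p pol) s) ∧
    ∀ s ∉ S1, ∀ s' ∉ S1, ∃ pol : S → A → ℝ, IsPolicy pol ∧ Reaches (polMat p pol) s s'

/-- The probability that the chain `M` started at `s` is in a transient state at time `t`.
For a finite chain, `E_s[T_{R}] = ∑_{t} transientMass M s t`, since the set of recurrent
states is closed. -/
noncomputable def transientMass (M : Matrix S S ℝ) (s : S) (t : ℕ) : ℝ :=
  ∑ s', Set.indicator {x : S | ¬Recurrent M x} (fun x => (M ^ t) s x) s'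

/-- The bounded transient time property with parameter `B`:
`E_s^π[T_{R^π}] ≤ B` for every deterministic stationary policy and every state. -/
def BoundedTransientTime [DecidableEq A] (p : S → A → S → ℝ) (B : ℝ) : Prop :=
  ∀ (d : S → A) (s : S) (n : ℕ),
    (∑ t ∈ Finset.range n, transientMass (polMat p (detPol d)) s t) ≤ B

/-- One-step variance vector `𝕍_{P}[V]`. -/
noncomputable def oneStepVar (M : Matrix S S ℝ) (V : S → ℝ) : S → ℝ := fun s =>
  ∑ s', M s s' * (V s' - (M *ᵥ V) s) ^ 2

/-- Probability of the path `(S_0, …, S_T) = path` for the chain `M` started at `s`. -/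
noncomputable def pathProb (M : Matrix S S ℝ) (s : S) {T : ℕ} (path : Fin (T + 1) → S) : ℝ :=
  (if path 0 = s then 1 else 0) * ∏ i : Fin T, M (path i.castSucc) (path i.succ)

/-- Expectation of a function of `(S_0, …, S_T)` for the chain `M` started at `s`. -/
noncomputable def pathExp (M : Matrix S S ℝ) (s : S) (T : ℕ) (f : (Fin (T + 1) → S) → ℝ) :
    ℝ :=
  ∑ path : Fin (T + 1) → S, pathProb M s path * f path

/-- Variance of a function of `(S_0, …, S_T)` for the chain `M` started at `s`. -/
noncomputable def pathVar (M : Matrix S S ℝ) (s : S) (T : ℕ) (f : (Fin (T + 1) → S) → ℝ) :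
    ℝ :=
  pathExp M s T fun path => (f path - pathExp M s T f) ^ 2

/-- Variance of the infinite-horizon discounted return, `𝕍_s^π[∑_{t} γ^t R_t]`,
as the limit of the variances of the truncated returns. -/
noncomputable def returnVar (M : Matrix S S ℝ) (rv : S → ℝ) (γ : ℝ) : S → ℝ := fun s =>
  limUnder atTop fun T : ℕ =>
    pathVar M s T fun path => ∑ t : Fin (T + 1), γ ^ (t : ℕ) * rv (path t)

end Core

section Aux

open Finset

variable {S : Type*} [Fintype S] [DecidableEq S] [Nonempty S]

open scoped Classical

lemma stoch_pow_nonneg {M : Matrix S S ℝ} (hM0 : ∀ s s', 0 ≤ M s s') (t : ℕ) (s s' : S) :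
    0 ≤ (M ^ t) s s' := by
  induction t generalizing s s' with
  | zero => simp [Matrix.one_apply]; positivity
  | succ t ih =>
    rw [pow_succ, Matrix.mul_apply]
    exact Finset.sum_nonneg fun y _ => mul_nonneg (ih s y) (hM0 y s')

lemma stoch_pow_rowsum {M : Matrix S S ℝ} (hM1 : ∀ s, ∑ s', M s s' = 1) (t : ℕ) (s : S) :
    ∑ s', (M ^ t) s s' = 1 := by
  induction t generalizing s with
  | zero => simp [Matrix.one_apply]
  | succ t ih =>
    simp only [pow_succ, Matrix.mul_apply]
    rw [Finset.sum_comm]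
    calc ∑ y, ∑ s', (M ^ t) s y * M y s'
        = ∑ y, (M ^ t) s y * ∑ s', M y s' := by simp [Finset.mul_sum]
      _ = 1 := by simp [hM1, ih]

lemma reaches_refl (M : Matrix S S ℝ) (s : S) : Reaches M s s :=
  ⟨0, by simp [Matrix.one_apply]⟩

lemma reaches_trans {M : Matrix S S ℝ} (hM0 : ∀ s s', 0 ≤ M s s') {s s' s'' : S}
    (h1 : Reaches M s s') (h2 : Reaches M s' s'') : Reaches M s s'' := by
  obtain ⟨a, ha⟩ := h1; obtain ⟨b, hb⟩ := h2
  refine ⟨a + b, lt_of_lt_of_le (mul_pos ha hb) ?_⟩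
  rw [pow_add, Matrix.mul_apply]
  exact Finset.single_le_sum
    (fun y _ => mul_nonneg (stoch_pow_nonneg hM0 a s y) (stoch_pow_nonneg hM0 b y s''))
    (Finset.mem_univ s')

lemma recurrent_of_reaches {M : Matrix S S ℝ} (hM0 : ∀ s s', 0 ≤ M s s') {s s' : S}
    (hs : Recurrent M s) (h : Reaches M s s') : Recurrent M s' := by
  intro x hx
  exact reaches_trans hM0 (hs x (reaches_trans hM0 h hx)) h

lemma exists_recurrent (M : Matrix S S ℝ) (hM0 : ∀ s s', 0 ≤ M s s') :
    ∃ s, Recurrent M s := by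
  obtain ⟨s₀, -, hmin⟩ := Finset.exists_min_image Finset.univ
    (fun s => (Finset.univ.filter (fun x => Reaches M s x)).card)
    ⟨Classical.arbitrary S, Finset.mem_univ _⟩
  refine ⟨s₀, fun s' h => ?_⟩
  by_contra hn
  have hsub : Finset.univ.filter (fun x => Reaches M s' x)
      ⊂ Finset.univ.filter (fun x => Reaches M s₀ x) := by
    rw [Finset.ssubset_def]
    constructor
    · intro x hx
      simp only [Finset.mem_filter, Finset.mem_univ, true_and] at hx ⊢
      exact reaches_trans hM0 h hx
    · intro hsub'
      have : s₀ ∈ Finset.univ.filter (fun x => Reaches M s' x) :=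
        hsub' (by simp [reaches_refl M s₀])
      exact hn (by simpa using this)
  exact absurd (hmin s' (Finset.mem_univ _)) (not_le.mpr (Finset.card_lt_card hsub))

lemma transientMass_eq (M : Matrix S S ℝ) (s : S) (t : ℕ) :
    transientMass M s t
      = ∑ x ∈ Finset.univ.filter (fun x => ¬Recurrent M x), (M ^ t) s x := by
  rw [transientMass, Finset.sum_filter]
  refine Finset.sum_congr rfl fun x _ => ?_
  rw [Set.indicator_apply]
  simp [Set.mem_setOf_eq]

lemma transientMass_nonneg {M : Matrix S S ℝ} (hM0 : ∀ s s', 0 ≤ M s s') (s : S) (t : ℕ) :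
    0 ≤ transientMass M s t := by
  rw [transientMass_eq]
  exact Finset.sum_nonneg fun x _ => stoch_pow_nonneg hM0 t s x

lemma transientMass_le_one {M : Matrix S S ℝ} (hM0 : ∀ s s', 0 ≤ M s s')
    (hM1 : ∀ s, ∑ s', M s s' = 1) (s : S) (t : ℕ) : transientMass M s t ≤ 1 := by
  rw [transientMass_eq]
  calc ∑ x ∈ Finset.univ.filter (fun x => ¬Recurrent M x), (M ^ t) s x
      ≤ ∑ x, (M ^ t) s x := Finset.sum_le_sum_of_subset_of_nonneg
        (Finset.subset_univ _) (fun x _ _ => stoch_pow_nonneg hM0 t s x)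
    _ = 1 := stoch_pow_rowsum hM1 t s

lemma pow_apply_eq_zero_of_recurrent {M : Matrix S S ℝ} (hM0 : ∀ s s', 0 ≤ M s s')
    {y x : S} (hy : Recurrent M y) (hx : ¬Recurrent M x) (u : ℕ) : (M ^ u) y x = 0 := by
  by_contra h
  exact hx (recurrent_of_reaches hM0 hy
    ⟨u, lt_of_le_of_ne (stoch_pow_nonneg hM0 u y x) (Ne.symm h)⟩)

lemma transientMass_zero_of_recurrent {M : Matrix S S ℝ} (hM0 : ∀ s s', 0 ≤ M s s')
    {y : S} (hy : Recurrent M y) (u : ℕ) : transientMass M y u = 0 := by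
  rw [transientMass_eq]
  refine Finset.sum_eq_zero fun x hx => ?_
  simp only [Finset.mem_filter, Finset.mem_univ, true_and] at hx
  exact pow_apply_eq_zero_of_recurrent hM0 hy hx u

lemma transientMass_add {M : Matrix S S ℝ} (hM0 : ∀ s s', 0 ≤ M s s')
    (s : S) (t u : ℕ) {c : ℝ} (hc : 0 ≤ c) (h : ∀ y, transientMass M y u ≤ c) :
    transientMass M s (t + u) ≤ c * transientMass M s t := by
  set T := Finset.univ.filter (fun x => ¬Recurrent M x) with hT
  have key : transientMass M s (t + u) = ∑ y ∈ T, (M ^ t) s y * transientMass M y u := by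
    rw [transientMass_eq]
    calc ∑ x ∈ T, (M ^ (t + u)) s x
        = ∑ x ∈ T, ∑ y, (M ^ t) s y * (M ^ u) y x := by
          simp [pow_add, Matrix.mul_apply]
      _ = ∑ y, (M ^ t) s y * ∑ x ∈ T, (M ^ u) y x := by
          rw [Finset.sum_comm]; simp [Finset.mul_sum]
      _ = ∑ y, (M ^ t) s y * transientMass M y u := by
          simp [transientMass_eq, hT]
      _ = ∑ y ∈ T, (M ^ t) s y * transientMass M y u := by
          refine (Finset.sum_subset (Finset.subset_univ T) fun y _ hy => ?_).symm
          have hyrec : Recurrent M y := by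
            by_contra hr
            exact hy (by simp [hT, hr])
          rw [transientMass_zero_of_recurrent hM0 hyrec, mul_zero]
  rw [key, transientMass_eq, ← hT, Finset.mul_sum]
  refine Finset.sum_le_sum fun y _ => ?_
  rw [mul_comm c]
  exact mul_le_mul_of_nonneg_left (h y) (stoch_pow_nonneg hM0 t s y)

lemma quarter_bound (f : S → ℝ) (T : Finset S) (h0 : ∑ x, f x = 0)
    (h1 : ∑ x, |f x| ≤ 1 / 2) : ∑ x ∈ T, f x ≤ 1 / 4 := by
  have ha : ∑ x ∈ T, f x ≤ ∑ x ∈ T, |f x| := Finset.sum_le_sum fun x _ => le_abs_self _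
  have hb : -∑ x ∈ Tᶜ, f x ≤ ∑ x ∈ Tᶜ, |f x| := by
    rw [← Finset.sum_neg_distrib]
    exact Finset.sum_le_sum fun x _ => neg_le_abs _
  have hc : ∑ x ∈ T, f x + ∑ x ∈ Tᶜ, f x = 0 := by rw [Finset.sum_add_sum_compl]; exact h0
  have hd : ∑ x ∈ T, |f x| + ∑ x ∈ Tᶜ, |f x| = ∑ x, |f x| := Finset.sum_add_sum_compl _ _
  linarith

/-- If the chain `M` mixes to within `1/2` in `L¹` at time `τ`, then from every state the
transient mass at time `τ` is at most `1/2`. -/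
lemma transientMass_half {M : Matrix S S ℝ} (hM0 : ∀ s s', 0 ≤ M s s')
    (hM1 : ∀ s, ∑ s', M s s' = 1) (ν : S → ℝ) (hν : ∑ x, ν x = 1) (τ : ℕ)
    (hmix : ∀ s, (∑ s', |(M ^ τ) s s' - ν s'|) ≤ 1 / 2) (y : S) :
    transientMass M y τ ≤ 1 / 2 := by
  set T := Finset.univ.filter (fun x => ¬Recurrent M x) with hT
  obtain ⟨s₀, hs₀⟩ := exists_recurrent M hM0
  have hA : ∑ x ∈ T, ν x ≤ 1 / 4 := by
    have h0 : ∑ x, (ν x - (M ^ τ) s₀ x) = 0 := by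
      rw [Finset.sum_sub_distrib, hν, stoch_pow_rowsum hM1]; ring
    have h1 : ∑ x, |ν x - (M ^ τ) s₀ x| ≤ 1 / 2 := by
      calc ∑ x, |ν x - (M ^ τ) s₀ x| = ∑ x, |(M ^ τ) s₀ x - ν x| := by
            simp [abs_sub_comm]
        _ ≤ 1 / 2 := hmix s₀
    have := quarter_bound (fun x => ν x - (M ^ τ) s₀ x) T h0 h1
    have hz : ∀ x ∈ T, (M ^ τ) s₀ x = 0 := by
      intro x hx
      simp only [hT, Finset.mem_filter, Finset.mem_univ, true_and] at hx
      exact pow_apply_eq_zero_of_recurrent hM0 hs₀ hx τ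
    calc ∑ x ∈ T, ν x = ∑ x ∈ T, (ν x - (M ^ τ) s₀ x) := by
          refine Finset.sum_congr rfl fun x hx => ?_
          rw [hz x hx]; ring
      _ ≤ 1 / 4 := this
  have hB : ∑ x ∈ T, ((M ^ τ) y x - ν x) ≤ 1 / 4 := by
    refine quarter_bound _ T ?_ (hmix y)
    rw [Finset.sum_sub_distrib, hν, stoch_pow_rowsum hM1]; ring
  calc transientMass M y τ = ∑ x ∈ T, (M ^ τ) y x := transientMass_eq M y τ
    _ = ∑ x ∈ T, ν x + ∑ x ∈ T, ((M ^ τ) y x - ν x) := by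
        rw [← Finset.sum_add_distrib]
        refine Finset.sum_congr rfl fun x _ => by ring
    _ ≤ 1 / 4 + 1 / 4 := add_le_add hA hB
    _ = 1 / 2 := by norm_num

end Aux

/-- In any finite MDP in which every deterministic stationary policy `d`
induces a Markov chain with a unique stationary distribution `ν d` and with a finite mixing
time bounded by `τunif`, the bounded transient time property holds with parameter `4·τunif`. -/
theorem stmt19 {S A : Type*} [Fintype S] [Fintype A] [DecidableEq S] [DecidableEq A]
    [Nonempty S] [Nonempty A]
    (p : S → A → S → ℝ) (hp : IsKernel p)
    (ν : (S → A) → S → ℝ)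
    (hstat : ∀ d : S → A, (∀ s, 0 ≤ ν d s) ∧ (∑ s, ν d s) = 1 ∧
      ν d ᵥ* polMat p (detPol d) = ν d)
    (huniq : ∀ (d : S → A) (μ : S → ℝ),
      (∀ s, 0 ≤ μ s) → (∑ s, μ s) = 1 → μ ᵥ* polMat p (detPol d) = μ → μ = ν d)
    (τunif : ℕ)
    (hmix : ∀ d : S → A, ∃ t : ℕ, 1 ≤ t ∧ t ≤ τunif ∧
      ∀ s, (∑ s', |(polMat p (detPol d) ^ t) s s' - ν d s'|) ≤ 1 / 2) :
    BoundedTransientTime p (4 * (τunif : ℝ)) := by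
  intro d s n
  set M := polMat p (detPol d) with hMdef
  have hM : ∀ x x', M x x' = p x (d x) x' := by
    intro x x'
    simp only [hMdef, polMat, detPol, Matrix.of_apply, ite_mul, one_mul, zero_mul]
    rw [Finset.sum_ite_eq' Finset.univ (d x) (fun a => p x a x')]
    simp
  have hM0 : ∀ x x', 0 ≤ M x x' := fun x x' => by rw [hM]; exact (hp x (d x)).1 x'
  have hM1 : ∀ x, ∑ x', M x x' = 1 := fun x => by
    simp only [hM]; exact (hp x (d x)).2
  obtain ⟨τ, hτ1, hττ, hτmix⟩ := hmix d
  have hνsum : ∑ x, ν d x = 1 := (hstat d).2.1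
  have hhalf : ∀ y, transientMass M y τ ≤ 1 / 2 :=
    transientMass_half hM0 hM1 (ν d) hνsum τ hτmix
  -- geometric decay along multiples of τ
  have hgeo : ∀ k : ℕ, transientMass M s (k * τ) ≤ (1 / 2 : ℝ) ^ k := by
    intro k
    induction k with
    | zero => simpa using transientMass_le_one hM0 hM1 s 0
    | succ k ih =>
      have := transientMass_add hM0 s (k * τ) τ (by norm_num : (0:ℝ) ≤ 1/2) hhalf
      calc transientMass M s ((k + 1) * τ) = transientMass M s (k * τ + τ) := by
            ring_nf
        _ ≤ 1 / 2 * transientMass M s (k * τ) := this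
        _ ≤ 1 / 2 * (1 / 2 : ℝ) ^ k := by
            refine mul_le_mul_of_nonneg_left ih (by norm_num)
        _ = (1 / 2 : ℝ) ^ (k + 1) := by ring
  -- transient mass at kτ + j is at most that at kτ
  have hmono : ∀ k j : ℕ, transientMass M s (k * τ + j) ≤ (1 / 2 : ℝ) ^ k := by
    intro k j
    have := transientMass_add hM0 s (k * τ) j (by norm_num : (0:ℝ) ≤ 1)
      (fun y => transientMass_le_one hM0 hM1 y j)
    calc transientMass M s (k * τ + j) ≤ 1 * transientMass M s (k * τ) := this
      _ = transientMass M s (k * τ) := one_mul _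
      _ ≤ (1 / 2 : ℝ) ^ k := hgeo k
  -- block sum bound
  have hblock : ∀ k : ℕ,
      (∑ t ∈ Finset.range (k * τ), transientMass M s t)
        ≤ 2 * (τ : ℝ) - 2 * (τ : ℝ) * (1 / 2 : ℝ) ^ k := by
    intro k
    induction k with
    | zero => simp
    | succ k ih =>
      have hdecomp : (∑ t ∈ Finset.range ((k + 1) * τ), transientMass M s t)
          = (∑ t ∈ Finset.range (k * τ), transientMass M s t)
            + ∑ j ∈ Finset.range τ, transientMass M s (k * τ + j) := by
        rw [add_mul, one_mul, Finset.sum_range_add]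
      have hblk : (∑ j ∈ Finset.range τ, transientMass M s (k * τ + j))
          ≤ (τ : ℝ) * (1 / 2 : ℝ) ^ k := by
        calc (∑ j ∈ Finset.range τ, transientMass M s (k * τ + j))
            ≤ ∑ _j ∈ Finset.range τ, (1 / 2 : ℝ) ^ k :=
              Finset.sum_le_sum fun j _ => hmono k j
          _ = (τ : ℝ) * (1 / 2 : ℝ) ^ k := by simp [mul_comm]
      rw [hdecomp]
      have : (2 : ℝ) * τ - 2 * τ * (1 / 2) ^ k + τ * (1 / 2) ^ k
          = 2 * τ - 2 * τ * (1 / 2) ^ (k + 1) := by ring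
      linarith
  -- conclude
  have hsub : (∑ t ∈ Finset.range n, transientMass M s t)
      ≤ ∑ t ∈ Finset.range (n * τ), transientMass M s t := by
    refine Finset.sum_le_sum_of_subset_of_nonneg ?_
      (fun t _ _ => transientMass_nonneg hM0 s t)
    exact Finset.range_subset_range.mpr (Nat.le_mul_of_pos_right n hτ1)
  have hτle : (τ : ℝ) ≤ (τunif : ℝ) := Nat.cast_le.mpr hττ
  have hpow : (0:ℝ) ≤ 2 * (τ : ℝ) * (1 / 2 : ℝ) ^ n := by positivity
  calc (∑ t ∈ Finset.range n, transientMass M s t)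
      ≤ ∑ t ∈ Finset.range (n * τ), transientMass M s t := hsub
    _ ≤ 2 * (τ : ℝ) - 2 * (τ : ℝ) * (1 / 2 : ℝ) ^ n := hblock n
    _ ≤ 2 * (τ : ℝ) := by linarith
    _ ≤ 4 * (τunif : ℝ) := by
        have h0 : (0:ℝ) ≤ (τ : ℝ) := Nat.cast_nonneg τ
        linarith

end PaperMDP
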